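/- Let b, β be real numbers with 0 ≤ b ≤ 1 and β ≥ 2, and set c = √(1 - b^2). Define F : ℝ → ℝ by F(s) = b^2 · s/(1-s) - s^2/(1-s) - s^2/(β-1+s). Then for every s ∈ [0,1), F(s) ≤ ((β-1)/β) · (1-c)^2, and in particular F(s) ≤ ((β-1)/β) · b^4. -/

import Mathlib

/-- Lemma 2.6 (upper-bound part): for `0 ≤ b ≤ 1`, `β ≥ 2`, `c = √(1 - b²)` and
`F(s) = b²·s/(1-s) - s²/(1-s) - s²/(β-1+s)`, every `s ∈ [0,1)` satisfies
`F(s) ≤ ((β-1)/β)(1-c)²` and in particular `F(s) ≤ ((β-1)/β) b⁴`. -/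
theorem F_le_sup (b β : ℝ) (hb0 : 0 ≤ b) (hb1 : b ≤ 1) (hβ : 2 ≤ β)
    (c : ℝ) (hc : c = Real.sqrt (1 - b ^ 2))
    (F : ℝ → ℝ)
    (hF : ∀ s, F s = b ^ 2 * s / (1 - s) - s ^ 2 / (1 - s) - s ^ 2 / (β - 1 + s)) :
    ∀ s ∈ Set.Ico (0 : ℝ) 1,
      F s ≤ ((β - 1) / β) * (1 - c) ^ 2 ∧ F s ≤ ((β - 1) / β) * b ^ 4 := by
  intro s hs
  obtain ⟨hs0, hs1⟩ := hs
  have h1 : (0:ℝ) < 1 - s := by linarith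
  have h2 : (0:ℝ) < β - 1 + s := by linarith
  have hβ0 : (0:ℝ) < β := by linarith
  have hb2nn : (0:ℝ) ≤ 1 - b ^ 2 := by nlinarith
  have hc2 : c ^ 2 = 1 - b ^ 2 := by rw [hc]; exact Real.sq_sqrt hb2nn
  have hc0 : 0 ≤ c := hc ▸ Real.sqrt_nonneg _
  have hc1 : c ≤ 1 := by nlinarith [hc2, hc0]
  have hFs : F s = ((b ^ 2 * s - s ^ 2) * (β - 1 + s) - s ^ 2 * (1 - s)) /
      ((1 - s) * (β - 1 + s)) := by
    rw [hF]; field_simp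
  have hmain : F s ≤ ((β - 1) / β) * (1 - c) ^ 2 := by
    rw [hFs, show ((β - 1) / β) * (1 - c) ^ 2 = ((β - 1) * (1 - c) ^ 2) / β by ring,
      div_le_div_iff₀ (by positivity) hβ0]
    have hb2 : b ^ 2 = 1 - c ^ 2 := by linarith
    have hid : ((b ^ 2 * s - s ^ 2) * (β - 1 + s) - s ^ 2 * (1 - s)) * β =
        (β - 1) * (1 - c) ^ 2 * ((1 - s) * (β - 1 + s)) -
          ((β - 1 + s) * (1 - c - s) - (1 - s) * s) ^ 2 := by
      linear_combination (s * (β - 1 + s) * β) * hb2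
    nlinarith [sq_nonneg ((β - 1 + s) * (1 - c - s) - (1 - s) * s)]
  refine ⟨hmain, hmain.trans ?_⟩
  have h1c : 1 - c ≤ b ^ 2 := by nlinarith [hc2, hc0]
  have h1cnn : 0 ≤ 1 - c := by linarith
  have : (1 - c) ^ 2 ≤ b ^ 4 := by nlinarith
  have hcoef : 0 ≤ (β - 1) / β := div_nonneg (by linarith) (by linarith)
  nlinarith [mul_le_mul_of_nonneg_left this hcoef]
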